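/- Let W be a matrix A_p weight on ℝ^d (1 < p < ∞) with reducing operators V_I, and let B be a locally integrable M_n(ℂ)-valued function. If for every dyadic cube J one has sup_J (1/|J|)∑_{ε}∑_{I ∈ D(J)} ‖V_I B_I^ε V_I^{−1}‖² ≤ C₁ and sup_J (1/|J|)∑_{ε}∑_{I ∈ D(J)} ‖V_I (B_I^ε)* V_I^{−1}‖² ≤ C₂ (i.e., B, B* ∈ BMO_W^p with dyadic norms C₁^{1/2}, C₂^{1/2}), then B ∈ BMO dyadically: sup_J (1/|J|)∑_{ε}∑_{I ∈ D(J)} ‖B_I^ε‖² ≤ C(n)·C₁^{1/2} C₂^{1/2}, using tr((B_I^ε)* B_I^ε) = tr((V_I (B_I^ε)* V_I^{−1})(V_I B_I^ε V_I^{−1})). -/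

import Mathlib

open MeasureTheory Matrix

noncomputable def opN {n : ℕ} (A : Matrix (Fin n) (Fin n) ℂ) : ℝ :=
  ‖Matrix.toEuclideanCLM (𝕜 := ℂ) A‖

/-- The dyadic cube of generation `I.1` and position `I.2` in `ℝ^d`. -/
def dcube {d : ℕ} (I : ℤ × (Fin d → ℤ)) : Set (Fin d → ℝ) :=
  {x | ∀ i, (2 : ℝ) ^ (-I.1) * I.2 i ≤ x i ∧ x i < (2 : ℝ) ^ (-I.1) * (I.2 i + 1)}


section Aux
open scoped Matrix.Norms.L2Operator
variable {N : ℕ}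


lemma coord_le (v : EuclideanSpace ℂ (Fin N)) (i : Fin N) : ‖v i‖ ≤ ‖v‖ := by
  rw [EuclideanSpace.norm_eq]
  have h := Finset.single_le_sum (f := fun j => ‖v j‖ ^ 2)
    (fun j _ => sq_nonneg _) (Finset.mem_univ i)
  calc ‖v i‖ = Real.sqrt (‖v i‖ ^ 2) := (Real.sqrt_sq (norm_nonneg _)).symm
    _ ≤ _ := Real.sqrt_le_sqrt h

lemma diag_le (M : Matrix (Fin N) (Fin N) ℂ) (i : Fin N) : ‖M i i‖ ≤ ‖M‖ := by
  have h := M.l2_opNorm_mulVec (EuclideanSpace.single i (1:ℂ))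
  rw [EuclideanSpace.norm_single, norm_one, mul_one] at h
  have h2 := (coord_le ((EuclideanSpace.equiv (Fin N) ℂ).symm
      (M *ᵥ EuclideanSpace.single i (1:ℂ))) i).trans h
  have h3 : ((EuclideanSpace.equiv (Fin N) ℂ).symm
      (M *ᵥ EuclideanSpace.single i (1:ℂ))) i = M i i := by
    show (M *ᵥ Pi.single i (1:ℂ)) i = M i i
    rw [Matrix.mulVec_single]; exact mul_one _
  rwa [h3] at h2

lemma trace_le (M : Matrix (Fin N) (Fin N) ℂ) : ‖M.trace‖ ≤ N * ‖M‖ := by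
  calc ‖M.trace‖ ≤ ∑ i, ‖M i i‖ := norm_sum_le _ _
    _ ≤ ∑ _i : Fin N, ‖M‖ := Finset.sum_le_sum (fun i _ => diag_le M i)
    _ = N * ‖M‖ := by simp

lemma norm_le_frob (B : Matrix (Fin N) (Fin N) ℂ) :
    ‖B‖ ≤ Real.sqrt (∑ i, ∑ j, ‖B i j‖ ^ 2) := by
  have hS : (0:ℝ) ≤ ∑ i, ∑ j, ‖B i j‖ ^ 2 := by positivity
  rw [cstar_norm_def]
  refine ContinuousLinearMap.opNorm_le_bound _ (Real.sqrt_nonneg _) (fun x => ?_)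
  have happ : ∀ i, (toEuclideanCLM (𝕜 := ℂ) B x) i = ∑ j, B i j * x j := by
    intro i
    rfl
  rw [EuclideanSpace.norm_eq]
  have hrow : ∀ i, ‖(toEuclideanCLM (𝕜 := ℂ) B x) i‖ ^ 2 ≤
      (∑ j, ‖B i j‖ ^ 2) * (∑ j, ‖x j‖ ^ 2) := by
    intro i
    rw [happ]
    calc ‖∑ j, B i j * x j‖ ^ 2 ≤ (∑ j, ‖B i j‖ * ‖x j‖) ^ 2 := by
          have : ‖∑ j, B i j * x j‖ ≤ ∑ j, ‖B i j‖ * ‖x j‖ :=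
            (norm_sum_le _ _).trans (by simp)
          exact pow_le_pow_left₀ (norm_nonneg _) this 2
      _ ≤ _ := Finset.sum_mul_sq_le_sq_mul_sq _ _ _
  calc Real.sqrt (∑ i, ‖(toEuclideanCLM (𝕜 := ℂ) B x) i‖ ^ 2)
      ≤ Real.sqrt (∑ i, (∑ j, ‖B i j‖ ^ 2) * (∑ j, ‖x j‖ ^ 2)) :=
        Real.sqrt_le_sqrt (Finset.sum_le_sum fun i _ => hrow i)
    _ = Real.sqrt ((∑ i, ∑ j, ‖B i j‖ ^ 2) * (∑ j, ‖x j‖ ^ 2)) := by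
        rw [← Finset.sum_mul]
    _ = Real.sqrt (∑ i, ∑ j, ‖B i j‖ ^ 2) * Real.sqrt (∑ j, ‖x j‖ ^ 2) :=
        Real.sqrt_mul hS _
    _ = Real.sqrt (∑ i, ∑ j, ‖B i j‖ ^ 2) * ‖x‖ := by rw [EuclideanSpace.norm_eq]

lemma frob_eq (B : Matrix (Fin N) (Fin N) ℂ) :
    ((Bᴴ * B).trace).re = ∑ i, ∑ j, ‖B i j‖ ^ 2 := by
  have h1 : (Bᴴ * B).trace = ∑ k, ∑ j, (starRingEnd ℂ) (B j k) * B j k := by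
    simp [Matrix.trace, Matrix.diag, Matrix.mul_apply, Matrix.conjTranspose_apply]
  rw [h1, Complex.re_sum]
  rw [Finset.sum_comm]
  refine Finset.sum_congr rfl fun i _ => ?_
  rw [Complex.re_sum]
  refine Finset.sum_congr rfl fun j _ => ?_
  rw [mul_comm, Complex.mul_conj]
  rw [Complex.ofReal_re, Complex.normSq_eq_norm_sq]

lemma keyest (B V : Matrix (Fin N) (Fin N) ℂ) (hV : IsUnit V) :
    ‖B‖ ^ 2 ≤ N * (‖V * Bᴴ * V⁻¹‖ * ‖V * B * V⁻¹‖) := by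
  have hVi : V⁻¹ * V = 1 := Matrix.nonsing_inv_mul V ((Matrix.isUnit_iff_isUnit_det V).mp hV)
  have hsim : (V * Bᴴ * V⁻¹) * (V * B * V⁻¹) = V * (Bᴴ * B) * V⁻¹ := by
    have h : (V * Bᴴ * V⁻¹) * (V * B * V⁻¹) = V * Bᴴ * ((V⁻¹ * V) * (B * V⁻¹)) := by
      rw [mul_assoc (V * Bᴴ) V⁻¹, mul_assoc V B V⁻¹, ← mul_assoc V⁻¹ V (B * V⁻¹)]
    rw [h, hVi, one_mul, ← mul_assoc, ← mul_assoc]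
  have htr : ((Bᴴ * B).trace) = ((V * Bᴴ * V⁻¹) * (V * B * V⁻¹)).trace := by
    rw [hsim, Matrix.trace_mul_cycle, ← mul_assoc, hVi, one_mul]
  calc ‖B‖ ^ 2 ≤ ((Bᴴ * B).trace).re := by
        have h1 := norm_le_frob B
        have h2 : ‖B‖ ^ 2 ≤ Real.sqrt (∑ i, ∑ j, ‖B i j‖ ^ 2) ^ 2 :=
          pow_le_pow_left₀ (norm_nonneg _) h1 2
        have hS : (0:ℝ) ≤ ∑ i, ∑ j, ‖B i j‖ ^ 2 :=
          Finset.sum_nonneg fun i _ => Finset.sum_nonneg fun j _ => sq_nonneg _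
        rw [Real.sq_sqrt hS] at h2
        rw [frob_eq]; exact h2
    _ ≤ ‖((V * Bᴴ * V⁻¹) * (V * B * V⁻¹)).trace‖ := by
        rw [htr]
        exact Complex.re_le_norm _
    _ ≤ N * ‖(V * Bᴴ * V⁻¹) * (V * B * V⁻¹)‖ := trace_le _
    _ ≤ N * (‖V * Bᴴ * V⁻¹‖ * ‖V * B * V⁻¹‖) :=
        mul_le_mul_of_nonneg_left (norm_mul_le _ _) (Nat.cast_nonneg N)

end Aux

open scoped Matrix.Norms.L2Operator

/-- If `B, B* ∈ BMO_W^p` dyadically (i.e. for every dyadic cube `J` the Carleson sums of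
`‖V_I B_I^ε V_I^{-1}‖²` and `‖V_I (B_I^ε)* V_I^{-1}‖²` over dyadic subcubes `I ⊆ J` are at most
`C₁|J|` and `C₂|J|` respectively), then `B ∈ BMO` dyadically:
`(1/|J|) ∑_ε ∑_{I ∈ D(J)} ‖B_I^ε‖² ≤ C(n)·C₁^{1/2} C₂^{1/2}`.  Here the Haar coefficients
`B_I^ε` and reducing operators `V_I` are given as data indexed by dyadic cubes and Haar
signatures. -/
theorem stmt7 (n d : ℕ) (C₁ C₂ : ℝ) (hC₁ : 0 ≤ C₁) (hC₂ : 0 ≤ C₂)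
    (Sig : Type) [Fintype Sig]
    (Bc : (ℤ × (Fin d → ℤ)) → Sig → Matrix (Fin n) (Fin n) ℂ)
    (V : (ℤ × (Fin d → ℤ)) → Matrix (Fin n) (Fin n) ℂ)
    (hV : ∀ I, IsUnit (V I))
    (h1 : ∀ (J : ℤ × (Fin d → ℤ)) (s : Finset ((ℤ × (Fin d → ℤ)) × Sig)),
      (∀ i ∈ s, dcube i.1 ⊆ dcube J) →
      ∑ i ∈ s, opN (V i.1 * Bc i.1 i.2 * (V i.1)⁻¹) ^ 2 ≤ C₁ * (volume (dcube J)).toReal)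
    (h2 : ∀ (J : ℤ × (Fin d → ℤ)) (s : Finset ((ℤ × (Fin d → ℤ)) × Sig)),
      (∀ i ∈ s, dcube i.1 ⊆ dcube J) →
      ∑ i ∈ s, opN (V i.1 * (Bc i.1 i.2)ᴴ * (V i.1)⁻¹) ^ 2 ≤ C₂ * (volume (dcube J)).toReal) :
    ∃ C : ℝ, 0 < C ∧ ∀ (J : ℤ × (Fin d → ℤ)) (s : Finset ((ℤ × (Fin d → ℤ)) × Sig)),
      (∀ i ∈ s, dcube i.1 ⊆ dcube J) →
      ∑ i ∈ s, opN (Bc i.1 i.2) ^ 2 ≤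
        C * C₁ ^ (1 / 2 : ℝ) * C₂ ^ (1 / 2 : ℝ) * (volume (dcube J)).toReal := by
  have hopN : ∀ A : Matrix (Fin n) (Fin n) ℂ, opN A = ‖A‖ := fun _ => rfl
  refine ⟨(n : ℝ) + 1, by positivity, fun J s hs => ?_⟩
  set a : ((ℤ × (Fin d → ℤ)) × Sig) → ℝ :=
    fun i => opN (V i.1 * (Bc i.1 i.2)ᴴ * (V i.1)⁻¹) with ha_def
  set b : ((ℤ × (Fin d → ℤ)) × Sig) → ℝ :=
    fun i => opN (V i.1 * Bc i.1 i.2 * (V i.1)⁻¹) with hb_def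
  set vol := (volume (dcube J)).toReal with hvol
  have hvol0 : 0 ≤ vol := ENNReal.toReal_nonneg
  have ha0 : ∀ i, 0 ≤ a i := fun i => by
    show 0 ≤ opN (V i.1 * (Bc i.1 i.2)ᴴ * (V i.1)⁻¹)
    rw [hopN]; exact norm_nonneg _
  have hb0 : ∀ i, 0 ≤ b i := fun i => by
    show 0 ≤ opN (V i.1 * Bc i.1 i.2 * (V i.1)⁻¹)
    rw [hopN]; exact norm_nonneg _
  have hsum0 : 0 ≤ ∑ i ∈ s, a i * b i :=
    Finset.sum_nonneg fun i _ => mul_nonneg (ha0 i) (hb0 i)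
  have hprod : (∑ i ∈ s, a i * b i) ^ 2 ≤ (C₂ * vol) * (C₁ * vol) :=
    (Finset.sum_mul_sq_le_sq_mul_sq s a b).trans
      (mul_le_mul (h2 J s hs) (h1 J s hs)
        (Finset.sum_nonneg fun i _ => sq_nonneg _) (mul_nonneg hC₂ hvol0))
  have habs : ∑ i ∈ s, a i * b i ≤ Real.sqrt ((C₂ * vol) * (C₁ * vol)) := by
    rw [← Real.sqrt_sq hsum0]
    exact Real.sqrt_le_sqrt hprod
  have hsqrt : Real.sqrt ((C₂ * vol) * (C₁ * vol)) =
      C₁ ^ (1 / 2 : ℝ) * C₂ ^ (1 / 2 : ℝ) * vol := by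
    rw [show (C₂ * vol) * (C₁ * vol) = (C₁ * C₂) * (vol * vol) by ring,
      Real.sqrt_mul (mul_nonneg hC₁ hC₂), Real.sqrt_mul_self hvol0,
      Real.sqrt_mul hC₁, Real.sqrt_eq_rpow, Real.sqrt_eq_rpow]
  have hpt : ∀ i ∈ s, opN (Bc i.1 i.2) ^ 2 ≤ (n : ℝ) * (a i * b i) := by
    intro i _
    show opN (Bc i.1 i.2) ^ 2 ≤ (n : ℝ) *
      (opN (V i.1 * (Bc i.1 i.2)ᴴ * (V i.1)⁻¹) * opN (V i.1 * Bc i.1 i.2 * (V i.1)⁻¹))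
    rw [hopN, hopN, hopN]
    exact keyest _ _ (hV i.1)
  have h0 : 0 ≤ C₁ ^ (1 / 2 : ℝ) * C₂ ^ (1 / 2 : ℝ) * vol := by positivity
  calc ∑ i ∈ s, opN (Bc i.1 i.2) ^ 2
      ≤ ∑ i ∈ s, (n : ℝ) * (a i * b i) := Finset.sum_le_sum hpt
    _ = (n : ℝ) * ∑ i ∈ s, a i * b i := (Finset.mul_sum _ _ _).symm
    _ ≤ (n : ℝ) * (C₁ ^ (1 / 2 : ℝ) * C₂ ^ (1 / 2 : ℝ) * vol) :=
        mul_le_mul_of_nonneg_left (habs.trans_eq hsqrt) (Nat.cast_nonneg n)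
    _ ≤ ((n : ℝ) + 1) * (C₁ ^ (1 / 2 : ℝ) * C₂ ^ (1 / 2 : ℝ) * vol) :=
        mul_le_mul_of_nonneg_right (by linarith) h0
    _ = ((n : ℝ) + 1) * C₁ ^ (1 / 2 : ℝ) * C₂ ^ (1 / 2 : ℝ) * vol := by ring
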